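/- Let μ be a probability measure and f ∈ L^p(μ) with ‖f‖₂ > 0, for p > 2. Then the entropy satisfies ∫ (f/‖f‖₂)² log((f/‖f‖₂)²) dμ ≤ (p/(p−2)) · log(‖f‖_p² / ‖f‖₂²), where ‖·‖_q denotes the L^q(μ) norm. -/

import Mathlib

open MeasureTheory

-- rpow algebra helper
lemma aux_rpow_mul_self {w p : ℝ} (hw : 0 < w) (hp : 2 < p) :
    w * w ^ ((p - 2) / 2) = w ^ (p / 2) := by
  nth_rewrite 1 [← Real.rpow_one w]
  rw [← Real.rpow_add hw]
  congr 1; ring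

lemma aux_pt {t N : ℝ} (hN : 0 < N) (p : ℝ) (hp : 0 < p) :
    (t ^ 2 / N) ^ (p / 2) = |t| ^ p / N ^ (p / 2) := by
  rw [Real.div_rpow (sq_nonneg t) hN.le]
  congr 1
  rw [← sq_abs t, ← Real.rpow_natCast |t| 2, ← Real.rpow_mul (abs_nonneg t)]
  ring_nf

-- pointwise Jensen/tangent inequality
lemma aux_key {p N c : ℝ} (hp : 2 < p) (hN : 0 < N) (hc : 0 < c) (t : ℝ) :
    t ^ 2 / N * Real.log (t ^ 2 / N) ≤
      2 / (p - 2) * ((t ^ 2 / N) ^ (p / 2) / c - t ^ 2 / N + t ^ 2 / N * Real.log c) := by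
  have hp2 : (0:ℝ) < p - 2 := by linarith
  rcases eq_or_ne t 0 with rfl | ht
  · simp [Real.zero_rpow (by positivity : p / 2 ≠ 0), Real.zero_rpow (by norm_num : (2:ℝ) ≠ 0)]
  · set w := t ^ 2 / N with hwdef
    have hw : 0 < w := div_pos (by positivity) hN
    have hg : 0 < w ^ ((p - 2) / 2) := Real.rpow_pos_of_pos hw _
    have hlog : Real.log w = 2 / (p - 2) * Real.log (w ^ ((p - 2) / 2)) := by
      rw [Real.log_rpow hw]; field_simp
    have tangent : Real.log (w ^ ((p - 2) / 2)) ≤ w ^ ((p - 2) / 2) / c - 1 + Real.log c := by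
      have h := Real.log_le_sub_one_of_pos (div_pos hg hc)
      rw [Real.log_div hg.ne' hc.ne'] at h
      linarith
    have h1 : w * Real.log (w ^ ((p - 2) / 2)) ≤ w * (w ^ ((p - 2) / 2) / c - 1 + Real.log c) :=
      mul_le_mul_of_nonneg_left tangent hw.le
    have hws : w * w ^ ((p - 2) / 2) = w ^ (p / 2) := aux_rpow_mul_self hw hp
    calc w * Real.log w = 2 / (p - 2) * (w * Real.log (w ^ ((p - 2) / 2))) := by
          rw [hlog]; ring
      _ ≤ 2 / (p - 2) * (w * (w ^ ((p - 2) / 2) / c - 1 + Real.log c)) := by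
          apply mul_le_mul_of_nonneg_left h1 (by positivity)
      _ = 2 / (p - 2) * (w ^ (p / 2) / c - w + w * Real.log c) := by
          rw [← hws]; ring

-- bound for integrability
lemma aux_bound {p : ℝ} (hp : 2 < p) {w : ℝ} (hw : 0 ≤ w) :
    |w * Real.log w| ≤ 1 + 2 / (p - 2) * w ^ (p / 2) := by
  have hp2 : (0:ℝ) < p - 2 := by linarith
  have hrp : 0 ≤ 2 / (p - 2) * w ^ (p / 2) := by positivity
  rcases eq_or_lt_of_le hw with rfl | hw0
  · simp at hrp ⊢; linarith
  rcases le_or_gt w 1 with h1 | h1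
  · have hlog : Real.log w ≤ 0 := Real.log_nonpos hw h1
    have htan : Real.log w⁻¹ ≤ w⁻¹ - 1 := Real.log_le_sub_one_of_pos (by positivity)
    rw [Real.log_inv] at htan
    have : -(w * Real.log w) ≤ 1 - w := by
      have := mul_le_mul_of_nonneg_left htan hw0.le
      have hww : w * w⁻¹ = 1 := mul_inv_cancel₀ hw0.ne'
      nlinarith
    have habs : |w * Real.log w| = -(w * Real.log w) := by
      rw [abs_of_nonpos]
      exact mul_nonpos_of_nonneg_of_nonpos hw hlog
    rw [habs]; nlinarith
  · have hlog : 0 ≤ Real.log w := Real.log_nonneg h1.le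
    have habs : |w * Real.log w| = w * Real.log w := abs_of_nonneg (by positivity)
    have hg : 0 < w ^ ((p - 2) / 2) := Real.rpow_pos_of_pos hw0 _
    have htan : Real.log (w ^ ((p - 2) / 2)) ≤ w ^ ((p - 2) / 2) - 1 :=
      Real.log_le_sub_one_of_pos hg
    rw [Real.log_rpow hw0] at htan
    have hws : w * w ^ ((p - 2) / 2) = w ^ (p / 2) := aux_rpow_mul_self hw0 hp
    have : w * Real.log w ≤ 2 / (p - 2) * w ^ (p / 2) := by
      have h2 : Real.log w ≤ 2 / (p - 2) * w ^ ((p - 2) / 2) := by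
        rw [div_mul_eq_mul_div, le_div_iff₀ hp2]
        nlinarith
      calc w * Real.log w ≤ w * (2 / (p - 2) * w ^ ((p - 2) / 2)) :=
            mul_le_mul_of_nonneg_left h2 hw0.le
        _ = 2 / (p - 2) * w ^ (p / 2) := by rw [← hws]; ring
    rw [habs]; linarith

theorem stmt_7 {α : Type*} [MeasurableSpace α]
    (μ : Measure α) [IsProbabilityMeasure μ]
    (p : ℝ) (hp : 2 < p) (f : α → ℝ)
    (hf : MemLp f (ENNReal.ofReal p) μ)
    (h2 : 0 < ∫ x, (f x) ^ 2 ∂μ) :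
    ∫ x, (f x) ^ 2 / (∫ y, (f y) ^ 2 ∂μ) *
        Real.log ((f x) ^ 2 / (∫ y, (f y) ^ 2 ∂μ)) ∂μ ≤
      p / (p - 2) *
        Real.log ((∫ x, |f x| ^ p ∂μ) ^ (2 / p) / (∫ x, (f x) ^ 2 ∂μ)) := by
  have hp0 : (0:ℝ) < p := by linarith
  have hp2 : (0:ℝ) < p - 2 := by linarith
  set N := ∫ x, (f x) ^ 2 ∂μ with hNdef
  have hfm : AEMeasurable f μ := hf.aestronglyMeasurable.aemeasurable
  have hA_int : Integrable (fun x => |f x| ^ p) μ := by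
    have := hf.integrable_norm_rpow (by simp [hp0]) ENNReal.ofReal_ne_top
    simpa [Real.norm_eq_abs, ENNReal.toReal_ofReal hp0.le] using this
  have h2_int : Integrable (fun x => (f x) ^ 2) μ := by
    have h22 : (2:ENNReal) ≤ ENNReal.ofReal p := by
      calc (2:ENNReal) = ENNReal.ofReal 2 := by norm_num
        _ ≤ ENNReal.ofReal p := ENNReal.ofReal_le_ofReal hp.le
    exact (hf.mono_exponent h22).integrable_sq
  set A := ∫ x, |f x| ^ p ∂μ with hAdef
  have hA_pos : 0 < A := by
    rcases (integral_nonneg (fun x => by positivity : (0 : α → ℝ) ≤ fun x => |f x| ^ p)).lt_or_eq with h | h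
    · exact h
    · exfalso
      have hz : (fun x => |f x| ^ p) =ᵐ[μ] 0 :=
        (integral_eq_zero_iff_of_nonneg (fun x => by positivity) hA_int).mp h.symm
      have hz2 : (fun x => (f x) ^ 2) =ᵐ[μ] (fun _ => (0:ℝ)) := by
        filter_upwards [hz] with x hx
        have hx' : |f x| ^ p = 0 := hx
        have : |f x| = 0 := by
          rwa [Real.rpow_eq_zero (abs_nonneg _) hp0.ne'] at hx'
        have : f x = 0 := abs_eq_zero.mp this
        simp [this]
      have : N = 0 := by
        rw [hNdef, integral_congr_ae hz2, integral_const]; simp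
      linarith
  have hNp : 0 < N ^ (p / 2) := Real.rpow_pos_of_pos h2 _
  set c := A / N ^ (p / 2) with hcdef
  have hc : 0 < c := div_pos hA_pos hNp
  -- the dominating function
  set G := fun x => 2 / (p - 2) *
      (|f x| ^ p / N ^ (p / 2) / c - (f x) ^ 2 / N + (f x) ^ 2 / N * Real.log c) with hGdef
  have hptwise : ∀ x, (f x) ^ 2 / N * Real.log ((f x) ^ 2 / N) ≤ G x := by
    intro x
    have := aux_key hp h2 hc (f x)
    rwa [aux_pt h2 p hp0] at this
  have hG_int : Integrable G μ := by
    exact ((((hA_int.div_const _).div_const c).sub (h2_int.div_const N)).add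
      ((h2_int.div_const N).mul_const (Real.log c))).const_mul _
  have hL_int : Integrable (fun x => (f x) ^ 2 / N * Real.log ((f x) ^ 2 / N)) μ := by
    apply Integrable.mono'
      ((integrable_const (1:ℝ)).add ((hA_int.div_const (N ^ (p / 2))).const_mul (2 / (p - 2))))
    · have h1 : AEMeasurable (fun x => (f x) ^ 2 / N) μ := (hfm.pow_const 2).div_const N
      exact (h1.mul (Real.measurable_log.comp_aemeasurable h1)).aestronglyMeasurable
    · filter_upwards with x
      simp only [Pi.add_apply]
      rw [Real.norm_eq_abs, ← aux_pt h2 p hp0 (t := f x)]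
      exact aux_bound hp (by positivity)
  have hmain : ∫ x, (f x) ^ 2 / N * Real.log ((f x) ^ 2 / N) ∂μ ≤ ∫ x, G x ∂μ :=
    integral_mono hL_int hG_int hptwise
  have e1 : ∫ x, |f x| ^ p / N ^ (p / 2) / c ∂μ = 1 := by
    rw [integral_div, integral_div, ← hAdef, ← hcdef, div_self hc.ne']
  have e2 : ∫ x, (f x) ^ 2 / N ∂μ = 1 := by
    rw [integral_div, ← hNdef, div_self h2.ne']
  have e3 : ∫ x, (f x) ^ 2 / N * Real.log c ∂μ = Real.log c := by
    rw [integral_mul_const, e2, one_mul]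
  have hGI : ∫ x, G x ∂μ = 2 / (p - 2) * Real.log c := by
    rw [hGdef]
    simp only
    rw [integral_const_mul]
    congr 1
    have hsub : Integrable (fun x => |f x| ^ p / N ^ (p / 2) / c - (f x) ^ 2 / N) μ :=
      ((hA_int.div_const _).div_const c).sub (h2_int.div_const N)
    have hmul : Integrable (fun x => (f x) ^ 2 / N * Real.log c) μ :=
      (h2_int.div_const N).mul_const (Real.log c)
    rw [integral_add hsub hmul,
      integral_sub ((hA_int.div_const _).div_const c) (h2_int.div_const N), e1, e2, e3]
    ring
  have hfinal : 2 / (p - 2) * Real.log c = p / (p - 2) * Real.log (A ^ (2 / p) / N) := by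
    have hlc : Real.log c = Real.log A - p / 2 * Real.log N := by
      rw [hcdef, Real.log_div hA_pos.ne' hNp.ne', Real.log_rpow h2]
    have hl2 : Real.log (A ^ (2 / p) / N) = 2 / p * Real.log A - Real.log N := by
      rw [Real.log_div (Real.rpow_pos_of_pos hA_pos _).ne' h2.ne', Real.log_rpow hA_pos]
    rw [hlc, hl2]
    field_simp
  calc ∫ x, (f x) ^ 2 / N * Real.log ((f x) ^ 2 / N) ∂μ ≤ ∫ x, G x ∂μ := hmain
    _ = 2 / (p - 2) * Real.log c := hGI
    _ = p / (p - 2) * Real.log (A ^ (2 / p) / N) := hfinal
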